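/- If B is a consistent k-by-k reciprocal matrix, then B is well-behaved; that is, either r₁ − r_k ≥ 1, or r₁ − r_k < 1 and 1/(1+r_k−r₁) + 1/(1+r_k−r₂) + ⋯ + 1/(1+r_k−r_{k−1}) + 1 − r_k ≥ 0, where r₁ ≥ ⋯ ≥ r_k are the row sums of B in nonincreasing order. -/
import Mathlib


open Matrix BigOperators Finset

/-- A positive square matrix is reciprocal if `A j i = 1 / A i j` for all `i, j`. -/
def IsReciprocal {n : ℕ} (A : Matrix (Fin n) (Fin n) ℝ) : Prop :=
  (∀ i j, 0 < A i j) ∧ ∀ i j, A j i = 1 / A i j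

/-- A reciprocal matrix is consistent if `A i j * A j k = A i k` for all `i, j, k`. -/
def IsConsistent {n : ℕ} (A : Matrix (Fin n) (Fin n) ℝ) : Prop :=
  IsReciprocal A ∧ ∀ i j k, A i j * A j k = A i k

/-- A vector is positive if all its entries are positive. -/
def PosVec {n : ℕ} (w : Fin n → ℝ) : Prop := ∀ i, 0 < w i

/-- A positive vector `w` is efficient for `A` if any positive vector `v` whose associated
consistent matrix approximates `A` at least as well as that of `w` (entrywise) is a positive
multiple of `w`. -/
def IsEfficient {n : ℕ} (A : Matrix (Fin n) (Fin n) ℝ) (w : Fin n → ℝ) : Prop :=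
  PosVec w ∧ ∀ v : Fin n → ℝ, PosVec v →
    (∀ i j, |A i j - v i / v j| ≤ |A i j - w i / w j|) →
    ∃ c : ℝ, 0 < c ∧ v = c • w

/-- The `i`-th row sum of a matrix. -/
noncomputable def rowSum {n : ℕ} (A : Matrix (Fin n) (Fin n) ℝ) (i : Fin n) : ℝ := ∑ j, A i j

/-- Given the row sums `r` in nonincreasing order (`r 0` the largest), the auxiliary function
`f(x) = 1/x + ∑_{i=2}^{k} 1/(r₁ - rᵢ + x) + 1 - r₁ - x` (note the `i = 1` term of the sum is
`1/x` since `r 0 - r 0 = 0`). -/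
noncomputable def auxF {k : ℕ} (r : Fin (k + 1) → ℝ) (x : ℝ) : ℝ :=
  (∑ i, 1 / (r 0 - r i + x)) + 1 - r 0 - x

/-- A reciprocal matrix `B` is well-behaved if, with row sums `r₁ ≥ ⋯ ≥ r_k`, either
`r₁ - r_k ≥ 1` (type I), or `r₁ - r_k < 1` and `f(1 + r_k - r₁) ≥ 0` (type II). -/
def WellBehaved {k : ℕ} (B : Matrix (Fin (k + 1)) (Fin (k + 1)) ℝ) : Prop :=
  ∃ σ : Equiv.Perm (Fin (k + 1)), Antitone (rowSum B ∘ σ) ∧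
    (1 ≤ rowSum B (σ 0) - rowSum B (σ (Fin.last k)) ∨
      (rowSum B (σ 0) - rowSum B (σ (Fin.last k)) < 1 ∧
        0 ≤ auxF (rowSum B ∘ σ) (1 + rowSum B (σ (Fin.last k)) - rowSum B (σ 0))))

/-- Every consistent reciprocal matrix is well-behaved. -/
theorem stmt14 {k : ℕ} (B : Matrix (Fin (k + 1)) (Fin (k + 1)) ℝ) (hB : IsConsistent B) :
    WellBehaved B := by
  obtain ⟨⟨hpos, hrec⟩, hcon⟩ := hB
  obtain ⟨m, -, hm⟩ := Finset.exists_min_image Finset.univ (fun i => B i 0) ⟨0, Finset.mem_univ 0⟩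
  have hmrow : rowSum B m ≤ (k + 1 : ℝ) := by
    have h1 : ∀ j, B m j ≤ 1 := by
      intro j
      have h2 : B m 0 * B 0 j = B m j := hcon m 0 j
      rw [← h2, hrec j 0, mul_one_div, div_le_one (hpos j 0)]
      exact hm j (Finset.mem_univ j)
    calc rowSum B m = ∑ j, B m j := rfl
      _ ≤ ∑ _j : Fin (k+1), (1:ℝ) := Finset.sum_le_sum fun j _ => h1 j
      _ = (k+1 : ℝ) := by simp
  set σ : Equiv.Perm (Fin (k+1)) := Fin.revPerm.trans (Tuple.sort (rowSum B)) with hσ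
  have hanti : Antitone (rowSum B ∘ σ) := by
    have h1 := Tuple.monotone_sort (rowSum B)
    intro a b hab
    exact h1 (by simpa [Fin.rev_le_rev] using hab)
  refine ⟨σ, hanti, ?_⟩
  have hmax : ∀ i, rowSum B (σ i) ≤ rowSum B (σ 0) := fun i => hanti (Fin.zero_le i)
  have hmin : ∀ i, rowSum B (σ (Fin.last k)) ≤ rowSum B (σ i) := fun i => hanti (Fin.le_last i)
  have hlast : rowSum B (σ (Fin.last k)) ≤ (k+1 : ℝ) := by
    have h := hmin (σ.symm m)
    rw [Equiv.apply_symm_apply] at h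
    exact h.trans hmrow
  rcases le_or_gt 1 (rowSum B (σ 0) - rowSum B (σ (Fin.last k))) with h | h
  · exact Or.inl h
  · refine Or.inr ⟨h, ?_⟩
    have hsum : rowSum B (σ (Fin.last k)) ≤
        ∑ i, 1 / (rowSum B (σ 0) - rowSum B (σ i) +
          (1 + rowSum B (σ (Fin.last k)) - rowSum B (σ 0))) := by
      calc rowSum B (σ (Fin.last k)) ≤ (k+1:ℝ) := hlast
        _ = ∑ _i : Fin (k+1), (1:ℝ) := by simp
        _ ≤ _ := by
            refine Finset.sum_le_sum fun i _ => ?_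
            have h1 := hmax i
            have h2 := hmin i
            rw [le_div_iff₀ (by linarith)]
            linarith
    unfold auxF
    simp only [Function.comp_apply]
    linarith [hsum]
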